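/- Let P ∈ ℝ^{n×n} be a nonnegative matrix with row sums ≤ γ, 0 < γ < 1, T U = P U + r with fixed point U*. With β_k = 1/(∑_{i=0}^k γ^{-2i}) and U^k = β_k U^0 + (1-β_k) T U^{k-1}: if U^0 ≤ T U^0 componentwise, then ‖T U^k - U^k‖_∞ ≤ ((γ⁻¹ - γ)(1 + γ - γ^(k+1)))/((γ^(k+1))⁻¹ - γ^(k+1)) · ‖U^0 - U*‖_∞ for all k ≥ 0. -/

import Mathlib

private lemma abel_sum (c a : ℕ → ℝ) (k : ℕ) :
    ∑ j ∈ Finset.range (k+1), c j * (a j - a (j+1))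
      = c 0 * a 0 + (∑ j ∈ Finset.range k, (c (j+1) - c j) * a (j+1)) - c k * a (k+1) := by
  induction k with
  | zero => simp [Finset.sum_range_one]; ring
  | succ k ih =>
    rw [Finset.sum_range_succ, ih, Finset.sum_range_succ]
    ring

theorem stmt_9 (n : ℕ) (hn : 0 < n) (γ : ℝ) (hγ0 : 0 < γ) (hγ1 : γ < 1)
    (P : Matrix (Fin n) (Fin n) ℝ)
    (hPnonneg : ∀ i j, 0 ≤ P i j)
    (hProw : ∀ i, ∑ j, P i j ≤ γ)
    (r : Fin n → ℝ)
    (T : (Fin n → ℝ) → (Fin n → ℝ))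
    (hTdef : ∀ U, T U = P.mulVec U + r)
    (Ustar : Fin n → ℝ) (hfix : T Ustar = Ustar)
    (β : ℕ → ℝ) (hβ : ∀ k, β k = (∑ i ∈ Finset.range (k+1), (γ^(2*i))⁻¹)⁻¹)
    (U : ℕ → Fin n → ℝ)
    (hU : ∀ k : ℕ, U (k+1) = β (k+1) • U 0 + (1 - β (k+1)) • T (U k))
    (h0 : U 0 ≤ T (U 0)) :
    ∀ k : ℕ,
      ‖T (U k) - U k‖
        ≤ ((γ⁻¹ - γ) * (1 + γ - γ^(k+1))) / ((γ^(k+1))⁻¹ - γ^(k+1))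
            * ‖U 0 - Ustar‖ := by
  have hγ : γ ≠ 0 := hγ0.ne'
  have hM0 : (0:ℝ) ≤ ‖U 0 - Ustar‖ := norm_nonneg _
  set M : ℝ := ‖U 0 - Ustar‖ with hMdef
  set v : Fin n → ℝ := Ustar - U 0 with hvdef
  have hvM : ∀ i, |v i| ≤ M := by
    intro i
    have h1 : ‖v i‖ ≤ ‖v‖ := norm_le_pi_norm v i
    have h2 : ‖v‖ = M := by rw [hvdef, hMdef]; exact norm_sub_rev _ _
    simpa [Real.norm_eq_abs, h2] using h1
  -- matrix monotonicity facts
  have hmono : ∀ x y : Fin n → ℝ, x ≤ y → P.mulVec x ≤ P.mulVec y := by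
    intro x y hxy i
    simp only [Matrix.mulVec, dotProduct]
    exact Finset.sum_le_sum fun j _ => mul_le_mul_of_nonneg_left (hxy j) (hPnonneg i j)
  have habs : ∀ (x : Fin n → ℝ) (c : ℝ), 0 ≤ c → (∀ j, |x j| ≤ c) →
      ∀ i, |P.mulVec x i| ≤ γ * c := by
    intro x c hc hxc i
    simp only [Matrix.mulVec, dotProduct]
    calc |∑ j, P i j * x j| ≤ ∑ j, |P i j * x j| := Finset.abs_sum_le_sum_abs _ _
      _ ≤ ∑ j, P i j * c := by
          refine Finset.sum_le_sum fun j _ => ?_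
          rw [abs_mul, abs_of_nonneg (hPnonneg i j)]
          exact mul_le_mul_of_nonneg_left (hxc j) (hPnonneg i j)
      _ = (∑ j, P i j) * c := by rw [Finset.sum_mul]
      _ ≤ γ * c := mul_le_mul_of_nonneg_right (hProw i) hc
  have hPnn : ∀ x : Fin n → ℝ, (∀ j, 0 ≤ x j) → ∀ i, 0 ≤ P.mulVec x i := by
    intro x hx i
    simp only [Matrix.mulVec, dotProduct]
    exact Finset.sum_nonneg fun j _ => mul_nonneg (hPnonneg i j) (hx j)
  -- the sequence w m = P^m v
  set w : ℕ → Fin n → ℝ := fun m => (P ^ m).mulVec v with hwdef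
  have hw0 : w 0 = v := by rw [hwdef]; simp [Matrix.one_mulVec]
  have hwsucc : ∀ m, w (m+1) = P.mulVec (w m) := by
    intro m
    rw [hwdef]
    simp only [pow_succ', ← Matrix.mulVec_mulVec]
  -- D 0 = v - P v
  have hD0v : T (U 0) - U 0 = v - P.mulVec v := by
    have hstar : P.mulVec Ustar + r = Ustar := by rw [← hTdef]; exact hfix
    rw [hTdef, hvdef, Matrix.mulVec_sub]
    linear_combination hstar
  have hPv : ∀ i, P.mulVec v i ≤ v i := by
    intro i
    have h1 := congrFun hD0v i
    simp only [Pi.sub_apply] at h1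
    have h2 := h0 i
    linarith
  have hwlev : ∀ m, ∀ i, w m i ≤ v i := by
    intro m
    induction m with
    | zero => intro i; rw [hw0]
    | succ m ih =>
      intro i
      rw [hwsucc]
      calc P.mulVec (w m) i ≤ P.mulVec v i := hmono _ _ (fun j => ih j) i
        _ ≤ v i := hPv i
  have hwabs : ∀ m, ∀ i, |w m i| ≤ γ ^ m * M := by
    intro m
    induction m with
    | zero => intro i; rw [hw0]; simpa using hvM i
    | succ m ih =>
      intro i
      rw [hwsucc]
      calc |P.mulVec (w m) i| ≤ γ * (γ ^ m * M) :=
            habs (w m) (γ ^ m * M) (mul_nonneg (pow_pos hγ0 m).le hM0) ih i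
        _ = γ ^ (m+1) * M := by ring
  have hv0 : ∀ i, 0 ≤ v i := by
    intro i
    have hlim : Filter.Tendsto (fun m : ℕ => -(γ ^ m * M)) Filter.atTop (nhds 0) := by
      have h1 : Filter.Tendsto (fun m : ℕ => γ ^ m) Filter.atTop (nhds 0) :=
        tendsto_pow_atTop_nhds_zero_of_lt_one hγ0.le hγ1
      have h2 := (h1.mul_const M).neg
      simpa using h2
    refine le_of_tendsto' hlim fun m => ?_
    have h1 := (abs_le.mp (hwabs m i)).1
    have h2 := hwlev m i
    linarith
  have hwnn : ∀ m, ∀ i, 0 ≤ w m i := by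
    intro m
    induction m with
    | zero => intro i; rw [hw0]; exact hv0 i
    | succ m ih => intro i; rw [hwsucc]; exact hPnn _ (fun j => ih j) i
  have hwdec : ∀ m, ∀ i, w (m+1) i ≤ w m i := by
    intro m
    induction m with
    | zero => intro i; rw [hwsucc, hw0]; exact hPv i
    | succ m ih =>
      intro i
      rw [hwsucc (m+1)]
      calc P.mulVec (w (m+1)) i ≤ P.mulVec (w m) i := hmono _ _ (fun j => ih j) i
        _ = w (m+1) i := (congrFun (hwsucc m) i).symm
  have hwle : ∀ m, ∀ i, w m i ≤ γ ^ m * M := fun m i => (abs_le.mp (hwabs m i)).2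
  -- the normalizing sums
  set s : ℕ → ℝ := fun k => ∑ i ∈ Finset.range (k+1), (γ^(2*i))⁻¹ with hsdef
  have hsk : ∀ k, s k = ∑ i ∈ Finset.range (k+1), (γ^(2*i))⁻¹ := fun k => by
    simp only [hsdef]
  have hspos : ∀ k, 0 < s k := by
    intro k
    rw [hsk]
    exact Finset.sum_pos (fun i _ => inv_pos.mpr (pow_pos hγ0 _))
      (Finset.nonempty_range_iff.mpr (Nat.succ_ne_zero k))
  have hβ' : ∀ k, β k = (s k)⁻¹ := by intro k; rw [hβ, hsk]
  have hkey : ∀ k, s (k+1) = 1 + (γ^2)⁻¹ * s k := by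
    intro k
    rw [hsk, hsk, Finset.sum_range_succ' (fun i => (γ^(2*i))⁻¹) (k+1), Finset.mul_sum]
    have h1 : ∀ i : ℕ, (γ^(2*(i+1)))⁻¹ = (γ^2)⁻¹ * (γ^(2*i))⁻¹ := by
      intro i
      rw [← mul_inv, show 2*(i+1) = 2 + 2*i by ring, pow_add]
    simp only [h1, Nat.mul_zero, pow_zero, inv_one]
    ring
  -- the recursion for the residuals
  have hrec : ∀ k, T (U (k+1)) - U (k+1)
      = β (k+1) • (T (U 0) - U 0) + (1 - β (k+1)) • P.mulVec (T (U k) - U k) := by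
    intro k
    rw [hU k, hTdef, hTdef (U k), hTdef (U 0)]
    simp only [Matrix.mulVec_add, Matrix.mulVec_smul, Matrix.mulVec_sub]
    module
  -- closed form
  have hclosed : ∀ k, s k • (T (U k) - U k)
      = ∑ j ∈ Finset.range (k+1), (γ^(2*j))⁻¹ • (w j - w (j+1)) := by
    intro k
    induction k with
    | zero =>
      have h1 : s 0 = 1 := by rw [hsk]; simp
      rw [h1, one_smul, hD0v, Finset.sum_range_one]
      rw [hwsucc 0, hw0]
      norm_num
    | succ k ih =>
      rw [hrec k, smul_add, smul_smul, smul_smul]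
      have hb1 : s (k+1) * β (k+1) = 1 := by
        rw [hβ']; exact mul_inv_cancel₀ (hspos (k+1)).ne'
      have hb2 : s (k+1) * (1 - β (k+1)) = (γ^2)⁻¹ * s k := by
        rw [mul_sub, mul_one, hb1, hkey]; ring
      rw [hb1, hb2, one_smul, mul_smul, ← Matrix.mulVec_smul, ih]
      have hPsum : P.mulVec (∑ j ∈ Finset.range (k+1), (γ^(2*j))⁻¹ • (w j - w (j+1)))
          = ∑ j ∈ Finset.range (k+1), (γ^(2*j))⁻¹ • (w (j+1) - w (j+1+1)) := by
        rw [← Matrix.mulVecLin_apply, map_sum]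
        refine Finset.sum_congr rfl fun j _ => ?_
        rw [map_smul, Matrix.mulVecLin_apply, Matrix.mulVec_sub, ← hwsucc j, ← hwsucc (j+1)]
      rw [hPsum, Finset.smul_sum]
      have h2 : ∀ j : ℕ, (γ^2)⁻¹ • ((γ^(2*j))⁻¹ • (w (j+1) - w (j+1+1)))
          = (γ^(2*(j+1)))⁻¹ • (w (j+1) - w (j+1+1)) := by
        intro j
        rw [smul_smul, ← mul_inv, show 2*(j+1) = 2 + 2*j by ring, pow_add]
      simp only [h2]
      rw [Finset.sum_range_succ' (fun j => (γ^(2*j))⁻¹ • (w j - w (j+1))) (k+1)]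
      have h3 : (γ^(2*0):ℝ)⁻¹ • (w 0 - w (0+1)) = T (U 0) - U 0 := by
        rw [hwsucc 0, hw0, hD0v]
        norm_num
      rw [h3, add_comm]
  -- componentwise bounds
  set A : ℕ → ℝ := fun k => 1 + ∑ j ∈ Finset.range k,
      ((γ^(2*(j+1)))⁻¹ - (γ^(2*j))⁻¹) * γ^(j+1) with hAdef
  have hAk : ∀ k, A k = 1 + ∑ j ∈ Finset.range k,
      ((γ^(2*(j+1)))⁻¹ - (γ^(2*j))⁻¹) * γ^(j+1) := fun k => by simp only [hAdef]
  have hcomp : ∀ k, ∀ i, 0 ≤ T (U k) i - U k i ∧ s k * (T (U k) i - U k i) ≤ A k * M := by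
    intro k i
    have h1 := congrFun (hclosed k) i
    simp only [Pi.smul_apply, Pi.sub_apply, Finset.sum_apply, smul_eq_mul] at h1
    constructor
    · have h2 : 0 ≤ ∑ j ∈ Finset.range (k+1), (γ^(2*j))⁻¹ * (w j i - w (j+1) i) :=
        Finset.sum_nonneg fun j _ => mul_nonneg (inv_pos.mpr (pow_pos hγ0 _)).le
          (by linarith [hwdec j i])
      rw [← h1] at h2
      nlinarith [hspos k]
    · rw [h1]
      have habel := abel_sum (fun j => (γ^(2*j))⁻¹) (fun j => w j i) k
      beta_reduce at habel
      rw [habel]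
      have hc0 : ((γ:ℝ)^(2*0))⁻¹ * w 0 i ≤ M := by
        rw [hw0]
        norm_num
        exact le_trans (le_abs_self _) (hvM i)
      have hterm : ∑ j ∈ Finset.range k, ((γ^(2*(j+1)))⁻¹ - (γ^(2*j))⁻¹) * w (j+1) i
          ≤ ∑ j ∈ Finset.range k, ((γ^(2*(j+1)))⁻¹ - (γ^(2*j))⁻¹) * (γ^(j+1) * M) := by
        refine Finset.sum_le_sum fun j _ => ?_
        have hcd : (0:ℝ) ≤ (γ^(2*(j+1)))⁻¹ - (γ^(2*j))⁻¹ := by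
          have h4 : (γ:ℝ)^(2*(j+1)) ≤ γ^(2*j) :=
            pow_le_pow_of_le_one hγ0.le hγ1.le (by omega)
          have h5 : (0:ℝ) < γ^(2*(j+1)) := pow_pos hγ0 _
          have h6 : (0:ℝ) < γ^(2*j) := pow_pos hγ0 _
          have := one_div_le_one_div_of_le h5 h4
          simp only [one_div] at this
          linarith
        exact mul_le_mul_of_nonneg_left (hwle (j+1) i) hcd
      have hlast : (0:ℝ) ≤ (γ^(2*k))⁻¹ * w (k+1) i :=
        mul_nonneg (inv_pos.mpr (pow_pos hγ0 _)).le (hwnn (k+1) i)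
      have hAM : A k * M = M + ∑ j ∈ Finset.range k,
          ((γ^(2*(j+1)))⁻¹ - (γ^(2*j))⁻¹) * (γ^(j+1) * M) := by
        rw [hAk, add_mul, one_mul, Finset.sum_mul]
        congr 1
        exact Finset.sum_congr rfl fun j _ => by ring
      rw [hAM]
      linarith
  -- algebraic closed forms
  have hγ2pos : (0:ℝ) < 1 - γ^2 := by nlinarith
  have hγ2 : (1:ℝ) - γ^2 ≠ 0 := hγ2pos.ne'
  have hAs : ∀ k, A k * γ^k = 1 + γ - γ^(k+1) := by
    intro k
    induction k with
    | zero =>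
      rw [hAk]
      simp only [Finset.sum_range_zero, add_zero, pow_zero, mul_one, pow_one]
      ring
    | succ k ih =>
      have hx : (γ:ℝ)^k ≠ 0 := pow_ne_zero _ hγ
      have hstep : A (k+1) = A k + ((γ^(2*(k+1)))⁻¹ - (γ^(2*k))⁻¹) * γ^(k+1) := by
        rw [hAk, hAk, Finset.sum_range_succ]; ring
      have hAkval : A k = (1 + γ - γ^(k+1)) / γ^k := by
        rw [eq_div_iff hx]; exact ih
      rw [hstep, hAkval]
      have e1 : (γ:ℝ)^(2*(k+1)) = γ^k*γ^k*γ*γ := by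
        rw [show 2*(k+1) = k+k+1+1 by ring, pow_succ, pow_succ, pow_add]
      have e2 : (γ:ℝ)^(2*k) = γ^k*γ^k := by rw [two_mul, pow_add]
      have e4 : (γ:ℝ)^(k+1+1) = γ^k*γ*γ := by rw [pow_succ, pow_succ]
      have e3 : (γ:ℝ)^(k+1) = γ^k*γ := by rw [pow_succ]
      rw [e1, e2, e4, e3]
      field_simp
      ring
  have hss : ∀ k, s k * ((1 - γ^2) * γ^(2*k)) = 1 - γ^(2*(k+1)) := by
    intro k
    induction k with
    | zero =>
      have h1 : s 0 = 1 := by rw [hsk]; simp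
      rw [h1]
      norm_num
    | succ k ih =>
      have hx : (γ:ℝ)^(2*k) ≠ 0 := pow_ne_zero _ hγ
      have hskval : s k = (1 - γ^(2*(k+1))) / ((1 - γ^2) * γ^(2*k)) := by
        rw [eq_div_iff (mul_ne_zero hγ2 hx)]; exact ih
      rw [hkey k, hskval]
      have e1 : (γ:ℝ)^(2*(k+1)) = γ^(2*k)*γ*γ := by
        rw [show 2*(k+1) = 2*k+1+1 by ring, pow_succ, pow_succ]
      have e5 : (γ:ℝ)^(2*(k+1+1)) = γ^(2*k)*γ*γ*γ*γ := by
        rw [show 2*(k+1+1) = 2*k+1+1+1+1 by ring, pow_succ, pow_succ, pow_succ, pow_succ]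
      have e7 : (γ:ℝ)^2 = γ*γ := by rw [pow_two]
      rw [e5, e1, e7]
      have hγ2' : (1:ℝ) - γ*γ ≠ 0 := by rw [← e7]; exact hγ2
      field_simp
      ring
  -- final assembly
  intro k
  have hx : (γ:ℝ)^k ≠ 0 := pow_ne_zero _ hγ
  have hgk1 : (0:ℝ) < γ^(k+1) := pow_pos hγ0 _
  have hgk1lt : (γ:ℝ)^(k+1) < 1 := pow_lt_one₀ hγ0.le hγ1 (Nat.succ_ne_zero k)
  have hinv1 : (1:ℝ) < (γ^(k+1))⁻¹ := by
    rw [lt_inv_comm₀]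
    · simpa using hgk1lt
    · norm_num
    · exact hgk1
  have hden : (0:ℝ) < (γ^(k+1))⁻¹ - γ^(k+1) := by linarith
  set L : ℝ := ((γ⁻¹ - γ) * (1 + γ - γ^(k+1))) / ((γ^(k+1))⁻¹ - γ^(k+1)) with hLdef
  have hLs : L * s k = A k := by
    have i1 : γ^(k+1) * (γ^(k+1))⁻¹ = 1 := mul_inv_cancel₀ hgk1.ne'
    have i2 : γ * γ⁻¹ = 1 := mul_inv_cancel₀ hγ
    have hmul : (γ:ℝ) * γ^(k+1) ≠ 0 := mul_ne_zero hγ (pow_ne_zero _ hγ)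
    have hmain2 : ((γ⁻¹ - γ) * (1 + γ - γ^(k+1)) * s k) * (γ * γ^(k+1))
        = (A k * ((γ^(k+1))⁻¹ - γ^(k+1))) * (γ * γ^(k+1)) := by
      linear_combination (A k * γ) * (hss k) - ((γ⁻¹ - γ) * s k * γ^2 * γ^k) * (hAs k)
        - (A k * γ) * i1 + (A k * s k * γ * γ^k * γ^k) * i2
    have hmain := mul_right_cancel₀ hmul hmain2
    rw [hLdef, div_mul_eq_mul_div, div_eq_iff hden.ne']
    exact hmain
  have hginv : (1:ℝ) < γ⁻¹ := by
    rw [lt_inv_comm₀]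
    · simpa using hγ1
    · norm_num
    · exact hγ0
  have hL0 : (0:ℝ) ≤ L := by
    rw [hLdef]
    apply div_nonneg _ hden.le
    apply mul_nonneg
    · linarith
    · nlinarith
  rw [pi_norm_le_iff_of_nonneg (mul_nonneg hL0 hM0)]
  intro i
  have hci := hcomp k i
  rw [Real.norm_eq_abs, Pi.sub_apply, abs_of_nonneg hci.1]
  have h2 : s k * (T (U k) i - U k i) ≤ s k * (L * M) := by
    rw [show s k * (L * M) = L * s k * M by ring, hLs]
    exact hci.2
  exact le_of_mul_le_mul_left h2 (hspos k)
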